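/- For every integer p ≥ 1 and every s on the unit circle with s ≠ 1, the imaginary part of K_p(s) = (s^p - 1 - i p·Im(s))/(1 - Re(s)) satisfies |Im K_p(s)| ≤ p³. -/

import Mathlib

open Complex

lemma aux_norm_bound (s : ℂ) (hs : ‖s‖ = 1) :
    ∀ p : ℕ, ‖s ^ p - 1 - (p : ℂ) * (s - 1)‖ ≤ (p : ℝ) * (p - 1) / 2 * ‖s - 1‖ ^ 2 := by
  intro p
  induction p with
  | zero => simp
  | succ p ih =>
    have key : s ^ (p + 1) - 1 - ((p : ℂ) + 1) * (s - 1)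
        = s * (s ^ p - 1 - (p : ℂ) * (s - 1)) + (p : ℂ) * (s - 1) ^ 2 := by ring
    push_cast
    rw [key]
    calc ‖s * (s ^ p - 1 - (p : ℂ) * (s - 1)) + (p : ℂ) * (s - 1) ^ 2‖
        ≤ ‖s * (s ^ p - 1 - (p : ℂ) * (s - 1))‖ + ‖(p : ℂ) * (s - 1) ^ 2‖ :=
          norm_add_le _ _
      _ = ‖s ^ p - 1 - (p : ℂ) * (s - 1)‖ + (p : ℝ) * ‖s - 1‖ ^ 2 := by
          rw [norm_mul, hs, one_mul, norm_mul, norm_pow]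
          norm_num
      _ ≤ (p : ℝ) * (p - 1) / 2 * ‖s - 1‖ ^ 2 + (p : ℝ) * ‖s - 1‖ ^ 2 := by linarith
      _ = ((p : ℝ) + 1) * ((p : ℝ) + 1 - 1) / 2 * ‖s - 1‖ ^ 2 := by ring

theorem stmt_4 (p : ℕ) (hp : 1 ≤ p) (s : ℂ) (hs : ‖s‖ = 1) (hs1 : s ≠ 1) :
    |((s ^ p - 1 - Complex.I * (p : ℂ) * (s.im : ℂ)) / ((1 : ℂ) - (s.re : ℂ))).im|
      ≤ (p : ℝ) ^ 3 := by
  have h2 : ‖s‖ = 1 := hs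
  have hnsq : s.re ^ 2 + s.im ^ 2 = 1 := by
    have h := Complex.sq_norm s
    rw [Complex.normSq_apply] at h
    nlinarith [h, h2]
  have hre : s.re < 1 := by
    have h1 : s.re ≤ 1 := le_trans (le_abs_self _) (h2 ▸ Complex.abs_re_le_norm s)
    rcases lt_or_eq_of_le h1 with h | h
    · exact h
    · exfalso
      apply hs1
      have him : s.im = 0 := by nlinarith
      exact Complex.ext h him
  set a : ℝ := 1 - s.re with ha_def
  have ha : 0 < a := by simp [ha_def]; linarith
  have hden : ((1 : ℂ) - (s.re : ℂ)) = ((a : ℝ) : ℂ) := by push_cast [ha_def]; ring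
  rw [hden, Complex.div_ofReal_im]
  have him : (s ^ p - 1 - Complex.I * (p : ℂ) * (s.im : ℂ)).im = (s ^ p).im - p * s.im := by
    simp [Complex.sub_im, Complex.mul_im, Complex.mul_re]
  have him2 : (s ^ p - 1 - (p : ℂ) * (s - 1)).im = (s ^ p).im - p * s.im := by
    simp [Complex.sub_im, Complex.mul_im]
  have hbound : |(s ^ p).im - p * s.im| ≤ (p : ℝ) * (p - 1) / 2 * ‖s - 1‖ ^ 2 := by
    calc |(s ^ p).im - p * s.im| = |(s ^ p - 1 - (p : ℂ) * (s - 1)).im| := by rw [him2]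
      _ ≤ ‖s ^ p - 1 - (p : ℂ) * (s - 1)‖ := Complex.abs_im_le_norm _
      _ ≤ (p : ℝ) * (p - 1) / 2 * ‖s - 1‖ ^ 2 := aux_norm_bound s hs p
  have hnorm : ‖s - 1‖ ^ 2 = 2 * a := by
    rw [Complex.sq_norm, Complex.normSq_apply]
    simp only [Complex.sub_re, Complex.sub_im, Complex.one_re, Complex.one_im, ha_def]
    nlinarith
  rw [him, abs_div, abs_of_pos ha]
  rw [div_le_iff₀ ha]
  calc |(s ^ p).im - p * s.im| ≤ (p : ℝ) * (p - 1) / 2 * (2 * a) := by rw [← hnorm]; exact hbound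
    _ ≤ (p : ℝ) ^ 3 * a := by
      have hp1 : (1 : ℝ) ≤ (p : ℝ) := by exact_mod_cast hp
      have hcube : (p : ℝ) * ((p : ℝ) - 1) ≤ (p : ℝ) ^ 3 := by nlinarith [sq_nonneg ((p:ℝ))]
      calc (p : ℝ) * ((p : ℝ) - 1) / 2 * (2 * a) = (p : ℝ) * ((p : ℝ) - 1) * a := by ring
        _ ≤ (p : ℝ) ^ 3 * a := mul_le_mul_of_nonneg_right hcube ha.le
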